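/- If H is biregular (all vertices of U have the same degree and all vertices of V have the same degree) and the label cover instance G has a labeling covering at least a c fraction of its edges, then the composed instance G' has a labeling covering at least a c fraction of its edges. -/

import Mathlib

open Finset

theorem key_count
    {A B U V : Type} [Fintype B] [Fintype U] [Fintype V] [Fintype A]
    [DecidableEq A] [DecidableEq B]
    (E : Finset (A × B))
    (Einv : B → U → A)
    (hinj : ∀ b, Function.Injective (Einv b))
    (hnbr : ∀ a b, (a, b) ∈ E ↔ ∃ u, Einv b u = a)
    (EH : U → V → Bool)
    (ΔH : ℕ) (hHdegU : ∀ u, (univ.filter (fun v => EH u v)).card = ΔH)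
    (Q : A → B → Prop) [∀ a b, Decidable (Q a b)] :
    (univ.filter (fun p : A × B × V =>
        (∃ u, Einv p.2.1 u = p.1 ∧ EH u p.2.2) ∧ Q p.1 p.2.1)).card
      = (E.filter (fun e => Q e.1 e.2)).card * ΔH := by
  classical
  rw [Finset.card_eq_sum_card_fiberwise
    (f := fun p : A × B × V => (p.1, p.2.1))
    (t := E.filter (fun e => Q e.1 e.2))
    (by
      rintro p hp
      simp only [mem_coe, mem_filter, mem_univ, true_and] at hp
      obtain ⟨⟨u, hu, _⟩, hQ⟩ := hp
      exact mem_filter.mpr ⟨(hnbr _ _).mpr ⟨u, hu⟩, hQ⟩)]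
  rw [Finset.sum_congr rfl (g := fun _ => ΔH), Finset.sum_const, smul_eq_mul]
  rintro ⟨a, b⟩ he
  simp only [mem_filter] at he
  obtain ⟨u0, hu0⟩ := (hnbr a b).mp he.1
  have : ((univ.filter (fun p : A × B × V =>
        (∃ u, Einv p.2.1 u = p.1 ∧ EH u p.2.2) ∧ Q p.1 p.2.1)).filter
        (fun p => (p.1, p.2.1) = (a, b)))
      = (univ.filter (fun v => EH u0 v)).image (fun v => (a, b, v)) := by
    ext ⟨a', b', v⟩
    simp only [mem_filter, mem_univ, true_and, mem_image, Prod.mk.injEq]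
    constructor
    · rintro ⟨⟨⟨u, hu, hEH⟩, hQ⟩, rfl, rfl⟩
      have : u = u0 := hinj b' (hu.trans hu0.symm)
      exact ⟨v, this ▸ hEH, rfl, rfl, rfl⟩
    · rintro ⟨w, hw, rfl, rfl, rfl⟩
      exact ⟨⟨⟨u0, hu0, hw⟩, he.2⟩, rfl, rfl⟩
  rw [this, Finset.card_image_of_injective _ (by intro x y h; simpa using h),
    hHdegU]

theorem stmt_1
    {A B SA SB U V : Type} [Fintype A] [Fintype B] [Fintype U] [Fintype V]
    [DecidableEq A] [DecidableEq SB]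
    (E : Finset (A × B)) (π : A → B → SA → SB)
    (Einv : B → U → A)
    (hinj : ∀ b, Function.Injective (Einv b))
    (hnbr : ∀ a b, (a, b) ∈ E ↔ ∃ u, Einv b u = a)
    (EH : U → V → Bool)
    (ΔH : ℕ) (hHdegU : ∀ u, (univ.filter (fun v => EH u v)).card = ΔH)
    (D : ℕ) (hHdegV : ∀ v, (univ.filter (fun u => EH u v)).card = D)
    (c : ℝ)
    (hcov : ∃ (φA : A → SA) (φB : B → SB),
      c * E.card ≤ ((E.filter (fun e => π e.1 e.2 (φA e.1) = φB e.2)).card : ℝ)) :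
    ∃ (φA : A → SA) (φB : B × V → SB),
      c * ((univ.filter (fun p : A × B × V =>
            ∃ u, Einv p.2.1 u = p.1 ∧ EH u p.2.2)).card : ℝ) ≤
        (((univ.filter (fun p : A × B × V =>
            ∃ u, Einv p.2.1 u = p.1 ∧ EH u p.2.2)).filter
            (fun p => π p.1 p.2.1 (φA p.1) = φB p.2)).card : ℝ) := by
  classical
  obtain ⟨φA, φB, hle⟩ := hcov
  refine ⟨φA, fun bv => φB bv.1, ?_⟩
  have h1 : (univ.filter (fun p : A × B × V =>
      ∃ u, Einv p.2.1 u = p.1 ∧ EH u p.2.2)).card = E.card * ΔH := by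
    have := key_count E Einv hinj hnbr EH ΔH hHdegU (fun _ _ => True)
    simpa using this
  have h2 : ((univ.filter (fun p : A × B × V =>
        ∃ u, Einv p.2.1 u = p.1 ∧ EH u p.2.2)).filter
        (fun p => π p.1 p.2.1 (φA p.1) = φB p.2.1)).card
      = (E.filter (fun e => π e.1 e.2 (φA e.1) = φB e.2)).card * ΔH := by
    rw [Finset.filter_filter]
    exact key_count E Einv hinj hnbr EH ΔH hHdegU
      (fun a b => π a b (φA a) = φB b)
  rw [h1, h2]
  push_cast
  have hΔ : (0:ℝ) ≤ (ΔH : ℝ) := Nat.cast_nonneg _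
  nlinarith [mul_le_mul_of_nonneg_right hle hΔ]
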